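/- Let t be a pooled test such that (a) removing any single individual i' from t does not increase welfare, i.e., u(t \ {i'}) ≤ u(t) for all i' ∈ t, (b) the singleton test {i'} does not beat t, i.e., q_{i'} u_{i'} ≤ u(t) for all i' ∈ t, and (c) every proper subset S ⊊ t with q_S < 1/2 satisfies q_{t\S} ≥ 1/2. Then u(t) = q_t Σ_{i∈t} u_i ≥ (1/4) Σ_{i∈t} q_i u_i. -/

import Mathlib

open Finset

/-- Probability of a health realization `ω` (true = healthy) under independent
healthy-probabilities `q`. -/
noncomputable def healthProb {n : ℕ} (q : Fin n → ℝ) (ω : Fin n → Bool) : ℝ :=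
  ∏ i, if ω i then q i else 1 - q i

/-- Probability that individual `i` lies in at least one negative test of the regime `T`. -/
noncomputable def inNegProb {n B : ℕ} (q : Fin n → ℝ) (T : Fin B → Finset (Fin n))
    (i : Fin n) : ℝ :=
  ∑ ω : Fin n → Bool,
    if ∃ j, i ∈ T j ∧ ∀ k ∈ T j, ω k = true then healthProb q ω else 0

/-- Expected welfare of a (possibly overlapping) testing regime `T`. -/
noncomputable def welfare {n B : ℕ} (q u : Fin n → ℝ) (T : Fin B → Finset (Fin n)) : ℝ :=
  ∑ i, u i * inNegProb q T i

/-- Stand-alone expected welfare of a single pooled test `t`. -/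
noncomputable def testWelfare {n : ℕ} (q u : Fin n → ℝ) (t : Finset (Fin n)) : ℝ :=
  (∏ i ∈ t, q i) * ∑ i ∈ t, u i

/-- Welfare of a non-overlapping testing regime, as a sum of stand-alone test welfares. -/
noncomputable def noWelfare {n B : ℕ} (q u : Fin n → ℝ) (T : Fin B → Finset (Fin n)) : ℝ :=
  ∑ j, testWelfare q u (T j)

/-- Probability that test `T j` is pivotal for individual `i`: `i ∈ T j`, test `T j` is
negative, and every earlier test containing `i` is positive. -/
noncomputable def pivotalProb {n B : ℕ} (q : Fin n → ℝ) (T : Fin B → Finset (Fin n))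
    (i : Fin n) (j : Fin B) : ℝ :=
  ∑ ω : Fin n → Bool,
    if i ∈ T j ∧ (∀ k ∈ T j, ω k = true) ∧
        (∀ j' : Fin B, j' < j → i ∈ T j' → ∃ k ∈ T j', ω k = false)
      then healthProb q ω else 0


lemma chord (x : ℝ) (h0 : 0 ≤ x) (h1 : x ≤ 1/2) :
    Real.exp (-(2 * Real.log 2) * x) ≤ 1 - x := by
  have h := convexOn_exp.2 (Set.mem_univ (0:ℝ)) (Set.mem_univ (-Real.log 2))
    (show (0:ℝ) ≤ 1 - 2*x by linarith) (show (0:ℝ) ≤ 2*x by linarith)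
    (show (1 - 2*x) + 2*x = 1 by ring)
  simp only [smul_eq_mul, mul_zero, zero_add, Real.exp_zero, mul_one] at h
  rw [Real.exp_neg, Real.exp_log (by norm_num : (0:ℝ) < 2)] at h
  have : (2*x) * (-Real.log 2) = -(2 * Real.log 2) * x := by ring
  rw [this] at h
  linarith

lemma prodge {n : ℕ} (S : Finset (Fin n)) (x : Fin n → ℝ)
    (hS : ∀ i ∈ S, 0 ≤ x i ∧ x i ≤ 1/2) :
    Real.exp (-(2 * Real.log 2) * ∑ i ∈ S, x i) ≤ ∏ i ∈ S, (1 - x i) := by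
  have : Real.exp (-(2 * Real.log 2) * ∑ i ∈ S, x i)
      = ∏ i ∈ S, Real.exp (-(2 * Real.log 2) * x i) := by
    rw [← Real.exp_sum, Finset.mul_sum]
  rw [this]
  exact Finset.prod_le_prod (fun i _ => (Real.exp_pos _).le)
    (fun i hi => chord (x i) (hS i hi).1 (hS i hi).2)

lemma auxineq {n : ℕ} (t : Finset (Fin n)) (x : Fin n → ℝ)
    (hx : ∀ i, 0 ≤ x i ∧ x i ≤ 1) (hs : ∑ i ∈ t, x i ≤ 1) :
    1 - ∑ i ∈ t, (x i)^2 ≤ 4 * ∏ i ∈ t, (1 - x i) := by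
  have hexp1 : Real.exp (-(2 * Real.log 2)) = 1/4 := by
    rw [Real.exp_neg, show (2:ℝ) * Real.log 2 = Real.log 2 + Real.log 2 by ring,
      Real.exp_add, Real.exp_log (by norm_num : (0:ℝ) < 2)]
    norm_num
  have hlog2 : 0 < Real.log 2 := Real.log_pos (by norm_num)
  by_cases hbig : ∃ j ∈ t, 1/2 < x j
  · obtain ⟨j, hj, hxj⟩ := hbig
    have hsmall : ∀ i ∈ t.erase j, 0 ≤ x i ∧ x i ≤ 1/2 := by
      intro i hi
      have hij : i ≠ j := Finset.ne_of_mem_erase hi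
      have hit : i ∈ t := Finset.mem_of_mem_erase hi
      refine ⟨(hx i).1, ?_⟩
      have h2 : x i + x j ≤ ∑ k ∈ t, x k := by
        have : x i + x j = ∑ k ∈ {i, j}, x k := by
          rw [Finset.sum_pair hij]
        rw [this]
        exact Finset.sum_le_sum_of_subset_of_nonneg
          (by intro k hk; simp at hk; rcases hk with h | h <;> simp [h, hit, hj])
          (fun k _ _ => (hx k).1)
      linarith
    have hse : ∑ i ∈ t.erase j, x i = (∑ i ∈ t, x i) - x j := by
      rw [← Finset.sum_erase_add t x hj]; ring
    have hpe : Real.exp (-(2 * Real.log 2) * (1 - x j)) ≤ ∏ i ∈ t.erase j, (1 - x i) := by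
      refine le_trans ?_ (prodge _ x hsmall)
      apply Real.exp_le_exp.2
      rw [hse]
      nlinarith
    have hconst : (1/2 : ℝ) ≤ Real.exp (-(2 * Real.log 2) * (1 - x j)) := by
      have : Real.exp (-Real.log 2) ≤ Real.exp (-(2 * Real.log 2) * (1 - x j)) := by
        apply Real.exp_le_exp.2
        nlinarith [(hx j).2]
      rw [Real.exp_neg, Real.exp_log (by norm_num : (0:ℝ) < 2)] at this
      linarith
    have hprodsplit : ∏ i ∈ t, (1 - x i) = (1 - x j) * ∏ i ∈ t.erase j, (1 - x i) :=
      (Finset.mul_prod_erase t _ hj).symm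
    have hsq : (x j)^2 ≤ ∑ i ∈ t, (x i)^2 := by
      apply Finset.single_le_sum (fun i _ => sq_nonneg (x i)) hj
    have hxj1 : x j ≤ 1 := (hx j).2
    -- 4 * (1 - x j) * exp(...) ≥ (1 - x j)*(1 + x j) = 1 - x j ^2 ≥ 1 - Σ x²
    have key : (1 - x j) * (1 + x j) ≤ 4 * ((1 - x j) * ∏ i ∈ t.erase j, (1 - x i)) := by
      have h1 : (1 - x j) * (1 + x j) ≤ (1 - x j) * (4 * Real.exp (-(2 * Real.log 2) * (1 - x j))) := by
        apply mul_le_mul_of_nonneg_left _ (by linarith)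
        linarith
      have h2 : (1 - x j) * (4 * Real.exp (-(2 * Real.log 2) * (1 - x j)))
          ≤ (1 - x j) * (4 * ∏ i ∈ t.erase j, (1 - x i)) := by
        apply mul_le_mul_of_nonneg_left _ (by linarith)
        linarith
      calc (1 - x j) * (1 + x j) ≤ _ := h1
        _ ≤ _ := h2
        _ = 4 * ((1 - x j) * ∏ i ∈ t.erase j, (1 - x i)) := by ring
    rw [hprodsplit]
    nlinarith
  · push_neg at hbig
    have h := prodge t x (fun i hi => ⟨(hx i).1, hbig i hi⟩)
    have h2 : Real.exp (-(2 * Real.log 2)) ≤ Real.exp (-(2 * Real.log 2) * ∑ i ∈ t, x i) := by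
      apply Real.exp_le_exp.2
      nlinarith
    rw [hexp1] at h2
    have hsqn : 0 ≤ ∑ i ∈ t, (x i)^2 := Finset.sum_nonneg (fun i _ => sq_nonneg _)
    nlinarith

/-- If a test `t` satisfies: (a) removing any single member does not increase welfare,
(b) no singleton test of a member beats `t`, and (c) every proper subset `S ⊊ t` with
`q_S < 1/2` has `q_{t \ S} ≥ 1/2`, then `u(t) ≥ (1/4) ∑_{i ∈ t} q_i u_i`. -/
theorem stmt4 {n : ℕ} (q u : Fin n → ℝ)
    (hq : ∀ i, 0 ≤ q i ∧ q i ≤ 1) (hu : ∀ i, 0 ≤ u i)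
    (t : Finset (Fin n))
    (ha : ∀ i' ∈ t, testWelfare q u (t.erase i') ≤ testWelfare q u t)
    (hb : ∀ i' ∈ t, q i' * u i' ≤ testWelfare q u t)
    (hc : ∀ S : Finset (Fin n), S ⊂ t → (∏ i ∈ S, q i) < 1 / 2 →
      (1 : ℝ) / 2 ≤ ∏ i ∈ t \ S, q i) :
    (1 / 4 : ℝ) * ∑ i ∈ t, q i * u i ≤ testWelfare q u t := by
  unfold testWelfare at *
  set P := ∏ i ∈ t, q i with hP
  set U := ∑ i ∈ t, u i with hU
  have hPnn : 0 ≤ P := Finset.prod_nonneg (fun i _ => (hq i).1)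
  have hUnn : 0 ≤ U := Finset.sum_nonneg (fun i _ => hu i)
  rcases eq_or_lt_of_le hPnn with hP0 | hPpos
  · -- P = 0, so welfare 0 and each q i * u i ≤ 0
    have hW : P * U = 0 := by rw [← hP0, zero_mul]
    have hsum : ∑ i ∈ t, q i * u i ≤ 0 := by
      have := Finset.sum_le_sum (f := fun i => q i * u i) (g := fun _ => (0:ℝ))
        (fun i hi => (hb i hi).trans hW.le)
      simpa using this
    rw [hW]; linarith
  rcases eq_or_lt_of_le hUnn with hU0 | hUpos
  · have hsum : ∑ i ∈ t, q i * u i ≤ U := by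
      apply Finset.sum_le_sum
      intro i hi
      nlinarith [(hq i).2, hu i, (hq i).1]
    nlinarith
  -- main case
  have hqpos : ∀ i ∈ t, 0 < q i := by
    intro i hi
    rcases eq_or_lt_of_le (hq i).1 with h | h
    · exfalso
      have : P = 0 := Finset.prod_eq_zero hi h.symm
      linarith
    · exact h
  have key : ∀ i ∈ t, (1 - q i) * U ≤ u i := by
    intro i hi
    have h := ha i hi
    have hPe : 0 < ∏ j ∈ t.erase i, q j :=
      Finset.prod_pos (fun j hj => hqpos j (Finset.mem_of_mem_erase hj))
    have hsum : ∑ j ∈ t.erase i, u j = U - u i := by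
      rw [hU, ← Finset.sum_erase_add t u hi]; ring
    have hprod : P = q i * ∏ j ∈ t.erase i, q j := (Finset.mul_prod_erase t q hi).symm
    rw [hsum, hprod] at h
    have hqi1 := (hq i).2
    nlinarith
  have hxs : ∑ i ∈ t, (1 - q i) ≤ 1 := by
    have h1 : ∑ i ∈ t, (1 - q i) * U ≤ U := by
      calc ∑ i ∈ t, (1 - q i) * U ≤ ∑ i ∈ t, u i := Finset.sum_le_sum key
        _ = U := rfl
    rw [← Finset.sum_mul] at h1
    nlinarith
  have haux := auxineq t (fun i => 1 - q i)
    (fun i => ⟨show (0:ℝ) ≤ 1 - q i by linarith [(hq i).2],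
      show (1:ℝ) - q i ≤ 1 by linarith [(hq i).1]⟩) hxs
  simp only [sub_sub_cancel] at haux
  -- Σ q_i u_i ≤ U - Σ (1-q_i) u_i ≤ U (1 - Σ (1-q_i)^2) ≤ 4 P U
  have h2 : ∑ i ∈ t, (1 - q i)^2 * U ≤ ∑ i ∈ t, (1 - q i) * u i := by
    apply Finset.sum_le_sum
    intro i hi
    have h1qi : 0 ≤ 1 - q i := by linarith [(hq i).2]
    nlinarith [key i hi]
  have h3 : ∑ i ∈ t, q i * u i = U - ∑ i ∈ t, (1 - q i) * u i := by
    rw [← Finset.sum_sub_distrib]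
    apply Finset.sum_congr rfl
    intro i _
    ring
  rw [← Finset.sum_mul] at h2
  -- h2 : (Σ (1-q_i)^2) * U ≤ Σ (1-q_i) u_i
  have h4 : ∑ i ∈ t, q i * u i ≤ (1 - ∑ i ∈ t, (1 - q i)^2) * U := by
    rw [h3]; nlinarith
  have h5 : (1 - ∑ i ∈ t, (1 - q i)^2) * U ≤ (4 * P) * U := by
    apply mul_le_mul_of_nonneg_right haux hUnn
  nlinarith
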